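/- Let R be a commutative ring, M a commutative monoid, and S ⊆ R[M] a subset. Set T = S ∩ R and U the image of S in (T⁻¹R)[M] under the map induced by localization. Then the R[M]-algebras S⁻¹(R[M]) and U⁻¹((T⁻¹R)[M]) are canonically isomorphic. -/

import Mathlib

/-- The ring morphism `R[M] → R'[M]` induced on monoid algebras by a ring morphism
`f : R → R'` on coefficients. -/
noncomputable def AddMonoidAlgebra.mapRangeRingHom' {R R' : Type*} [CommSemiring R]
    [CommSemiring R'] (M : Type*) [AddCommMonoid M] (f : R →+* R') :
    AddMonoidAlgebra R M →+* AddMonoidAlgebra R' M :=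
  AddMonoidAlgebra.liftNCRingHom ((AddMonoidAlgebra.singleZeroRingHom).comp f)
    (AddMonoidAlgebra.of R' M) (fun _ _ => Commute.all _ _)

theorem AddMonoidAlgebra.mapRangeRingHom'_single {R R' : Type*} [CommSemiring R]
    [CommSemiring R'] (M : Type*) [AddCommMonoid M] (f : R →+* R') (m : M) (r : R) :
    AddMonoidAlgebra.mapRangeRingHom' M f (AddMonoidAlgebra.single m r)
      = AddMonoidAlgebra.single m (f r) := by
  simp [AddMonoidAlgebra.mapRangeRingHom', AddMonoidAlgebra.liftNCRingHom,
    AddMonoidAlgebra.singleZeroRingHom, AddMonoidAlgebra.of_apply,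
    AddMonoidAlgebra.single_mul_single]

theorem AddMonoidAlgebra.mapRangeRingHom'_apply {R R' : Type*} [CommSemiring R]
    [CommSemiring R'] (M : Type*) [AddCommMonoid M] (f : R →+* R')
    (x : AddMonoidAlgebra R M) (m : M) :
    (AddMonoidAlgebra.mapRangeRingHom' M f x).coeff m = f (x.coeff m) := by
  induction x using AddMonoidAlgebra.induction_linear with
  | zero => simp
  | add a b ha hb => rw [map_add, AddMonoidAlgebra.coeff_add, Finsupp.add_apply, ha, hb,
      AddMonoidAlgebra.coeff_add, Finsupp.add_apply, map_add]
  | single a b =>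
      rw [AddMonoidAlgebra.mapRangeRingHom'_single, AddMonoidAlgebra.coeff_single,
        AddMonoidAlgebra.coeff_single]
      by_cases hh : a = m
      · subst hh; rw [Finsupp.single_eq_same, Finsupp.single_eq_same]
      · rw [Finsupp.single_eq_of_ne' hh, Finsupp.single_eq_of_ne' hh, map_zero]

/-- If `TR` is a localization of `R` at `P`, then `TR[M]` is a localization of `R[M]` at
the image of `P`. -/
theorem AddMonoidAlgebra.isLocalization_mapRange (R TR : Type*) [CommRing R] [CommRing TR]
    [Algebra R TR] (P : Submonoid R) [IsLocalization P TR] (M : Type*) [AddCommMonoid M] :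
    letI ψ : AddMonoidAlgebra R M →+* AddMonoidAlgebra TR M :=
      AddMonoidAlgebra.mapRangeRingHom' M (algebraMap R TR)
    letI : Algebra (AddMonoidAlgebra R M) (AddMonoidAlgebra TR M) := ψ.toAlgebra
    IsLocalization (P.map (algebraMap R (AddMonoidAlgebra R M))) (AddMonoidAlgebra TR M) := by
  set ψ : AddMonoidAlgebra R M →+* AddMonoidAlgebra TR M :=
      AddMonoidAlgebra.mapRangeRingHom' M (algebraMap R TR) with hψdef
  letI : Algebra (AddMonoidAlgebra R M) (AddMonoidAlgebra TR M) := ψ.toAlgebra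
  have halg : ∀ r : R, algebraMap R (AddMonoidAlgebra R M) r = AddMonoidAlgebra.single 0 r := by
    intro r
    simp [AddMonoidAlgebra.coe_algebraMap]
  have hψ : ∀ x : AddMonoidAlgebra R M,
      algebraMap (AddMonoidAlgebra R M) (AddMonoidAlgebra TR M) x = ψ x := fun _ => rfl
  refine ⟨⟨?_, ?_, ?_⟩⟩
  · rintro ⟨_, ⟨p, hp, rfl⟩⟩
    show IsUnit (algebraMap (AddMonoidAlgebra R M) (AddMonoidAlgebra TR M)
      (algebraMap R (AddMonoidAlgebra R M) p))
    rw [hψ, halg, AddMonoidAlgebra.mapRangeRingHom'_single]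
    exact (IsLocalization.map_units TR ⟨p, hp⟩).map (AddMonoidAlgebra.singleZeroRingHom)
  · intro z
    obtain ⟨b, hb⟩ := IsLocalization.exist_integer_multiples P z.coeff.support (fun m => z.coeff m)
    have hg : ∀ m : M, ∃ r : R, (m ∉ z.coeff.support → r = 0) ∧
        algebraMap R TR r = (b : R) • z.coeff m := by
      intro m
      by_cases hm : m ∈ z.coeff.support
      · obtain ⟨r, hr⟩ := hb m hm
        exact ⟨r, fun h => absurd hm h, hr⟩
      · exact ⟨0, fun _ => rfl, by simp [Finsupp.notMem_support_iff.mp hm]⟩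
    choose g hg0 hgspec using hg
    refine ⟨⟨AddMonoidAlgebra.ofCoeff (Finsupp.onFinset z.coeff.support g
      (fun m hne => by by_contra h; exact hne (hg0 m h))),
      ⟨AddMonoidAlgebra.single 0 (b : R), Submonoid.mem_map.mpr ⟨b, b.2, halg b⟩⟩⟩, ?_⟩
    show z * ψ (AddMonoidAlgebra.single 0 (b : R)) = ψ _
    rw [AddMonoidAlgebra.mapRangeRingHom'_single]
    ext m
    dsimp only
    rw [AddMonoidAlgebra.coeff_mul_single_zero, AddMonoidAlgebra.mapRangeRingHom'_apply,
      Finsupp.onFinset_apply, hgspec, Algebra.smul_def, mul_comm]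
  · intro a₁ a₂ h
    classical
    replace h : ψ a₁ = ψ a₂ := h
    set s : Finset M := a₁.coeff.support ∪ a₂.coeff.support with hs
    have key : ∀ m : M, ∃ c : P, (c : R) * a₁.coeff m = (c : R) * a₂.coeff m := by
      intro m
      have : algebraMap R TR (a₁.coeff m) = algebraMap R TR (a₂.coeff m) := by
        rw [← AddMonoidAlgebra.mapRangeRingHom'_apply M (algebraMap R TR) a₁ m,
          ← AddMonoidAlgebra.mapRangeRingHom'_apply M (algebraMap R TR) a₂ m, h]
      exact (IsLocalization.eq_iff_exists P TR).mp this
    choose c hc using key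
    refine ⟨⟨AddMonoidAlgebra.single 0 (∏ m ∈ s, (c m : R)),
      Submonoid.mem_map.mpr ⟨_, Submonoid.prod_mem P (fun m _ => (c m).2), halg _⟩⟩, ?_⟩
    show AddMonoidAlgebra.single 0 (∏ m ∈ s, (c m : R)) * a₁
      = AddMonoidAlgebra.single 0 (∏ m ∈ s, (c m : R)) * a₂
    ext m
    rw [AddMonoidAlgebra.coeff_single_zero_mul, AddMonoidAlgebra.coeff_single_zero_mul]
    by_cases hm : m ∈ s
    · rw [← Finset.mul_prod_erase s _ hm, mul_assoc, mul_assoc, mul_left_comm,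
        mul_left_comm ((c m : R)) (∏ x ∈ s.erase m, (c x : R)) (a₂.coeff m), hc m]
    · rw [hs, Finset.mem_union, not_or] at hm
      rw [Finsupp.notMem_support_iff.mp hm.1, Finsupp.notMem_support_iff.mp hm.2]

/-- Abstract two-step localization lemma. -/
theorem isLocalization_comp_aux {A C B : Type*} [CommRing A] [CommRing C] [CommRing B]
    (ψ : A →+* C) (cs P : Submonoid A) (hP : P ≤ cs) [Algebra C B]
    (loc1 : @IsLocalization A _ P C _ ψ.toAlgebra)
    (loc2 : IsLocalization (Submonoid.map ψ cs) B) :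
    @IsLocalization A _ cs B _ ((algebraMap C B).comp ψ).toAlgebra := by
  letI : Algebra A B := ((algebraMap C B).comp ψ).toAlgebra
  have hab : ∀ x : A, algebraMap A B x = algebraMap C B (ψ x) := fun _ => rfl
  letI algAC : Algebra A C := ψ.toAlgebra
  haveI loc1' : IsLocalization P C := loc1
  haveI loc2' : IsLocalization (Submonoid.map ψ cs) B := loc2
  have hac : ∀ x : A, algebraMap A C x = ψ x := fun _ => rfl
  refine ⟨⟨?_, ?_, ?_⟩⟩
  · rintro ⟨x, hx⟩
    rw [hab]
    exact IsLocalization.map_units B ⟨ψ x, Submonoid.mem_map_of_mem _ hx⟩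
  · intro z
    obtain ⟨⟨cc, u⟩, e⟩ := IsLocalization.surj (Submonoid.map ψ cs) z
    obtain ⟨x, hx, hxu⟩ := u.2
    obtain ⟨⟨a, t⟩, e2⟩ := IsLocalization.surj P cc
    refine ⟨⟨a, ⟨x * t, mul_mem hx (hP t.2)⟩⟩, ?_⟩
    dsimp only at e e2
    have h1 : z * algebraMap A B (x * ↑t) = algebraMap C B cc * algebraMap C B (ψ ↑t) := by
      rw [hab, map_mul ψ, map_mul (algebraMap C B), ← mul_assoc, hxu, e]
    show z * algebraMap A B (x * ↑t) = algebraMap A B a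
    rw [h1, ← map_mul, ← hac ↑t, e2, hab, hac]
  · intro a₁ a₂ h
    rw [hab, hab] at h
    obtain ⟨u, hu⟩ := IsLocalization.exists_of_eq (M := Submonoid.map ψ cs) h
    obtain ⟨x, hx, hxu⟩ := u.2
    have : algebraMap A C (x * a₁) = algebraMap A C (x * a₂) := by
      rw [hac, hac, map_mul, map_mul, hxu, hu]
    obtain ⟨t, ht⟩ := IsLocalization.exists_of_eq (M := P) this
    exact ⟨⟨↑t * x, mul_mem (hP t.2) hx⟩, by
      simpa only [mul_assoc, id_eq] using congrArg id ht⟩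

/-- Let `R` be a commutative ring, `M` a commutative monoid and `S ⊆ R[M]` a subset.
Set `T = S ∩ R` (elements of `R` whose canonical image lies in `S`) and let `U` be
the image of `S` in `(T⁻¹R)[M]` under the map induced by the localization `R → T⁻¹R`.
Then the `R[M]`-algebra `U⁻¹((T⁻¹R)[M])` is a localization of `R[M]` at (the
multiplicative set generated by) `S`, i.e. the `R[M]`-algebras `S⁻¹(R[M])` and
`U⁻¹((T⁻¹R)[M])` are canonically isomorphic. -/
theorem monoidAlgebra_localization_two_step (R : Type*) [CommRing R]
    (M : Type*) [AddCommMonoid M] (S : Set (AddMonoidAlgebra R M)) :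
    letI T : Set R := (algebraMap R (AddMonoidAlgebra R M)) ⁻¹' S
    letI TR := Localization (Submonoid.closure T)
    letI ψ : AddMonoidAlgebra R M →+* AddMonoidAlgebra TR M :=
      AddMonoidAlgebra.mapRangeRingHom' M (algebraMap R TR)
    letI U : Set (AddMonoidAlgebra TR M) := ψ '' S
    letI B := Localization (Submonoid.closure U)
    letI : Algebra (AddMonoidAlgebra R M) B :=
      ((algebraMap (AddMonoidAlgebra TR M) B).comp ψ).toAlgebra
    IsLocalization (Submonoid.closure S) B := by
  set T : Set R := (algebraMap R (AddMonoidAlgebra R M)) ⁻¹' S with hT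
  set TR := Localization (Submonoid.closure T) with hTR
  set ψ : AddMonoidAlgebra R M →+* AddMonoidAlgebra TR M :=
      AddMonoidAlgebra.mapRangeRingHom' M (algebraMap R TR) with hψ
  set U : Set (AddMonoidAlgebra TR M) := ψ '' S with hU
  have hPle : (Submonoid.closure T).map (algebraMap R (AddMonoidAlgebra R M))
      ≤ Submonoid.closure S := by
    rw [MonoidHom.map_mclosure]
    exact Submonoid.closure_mono (Set.image_preimage_subset _ _)
  have hUeq : Submonoid.closure U = Submonoid.map ψ (Submonoid.closure S) := by
    rw [hU, MonoidHom.map_mclosure]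
  have loc1 := AddMonoidAlgebra.isLocalization_mapRange R TR (Submonoid.closure T) M
  have loc2 : IsLocalization (Submonoid.map ψ (Submonoid.closure S))
      (Localization (Submonoid.closure U)) := by
    rw [← hUeq]; infer_instance
  exact isLocalization_comp_aux (B := Localization (Submonoid.closure U)) ψ (Submonoid.closure S)
    ((Submonoid.closure T).map (algebraMap R (AddMonoidAlgebra R M))) hPle loc1 loc2
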